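/- Let μ ∈ M(m) satisfy property P. Then for every n ≥ 1 there exists a probability distribution ν on (S×S)^n, describing the joint law of ((s₁,t₁),…,(sₙ,tₙ)), such that: (P2) the marginal law of (t₁,…,tₙ) equals the marginal law of (s₁,…,sₙ), and both equal the n-step Markov chain law with initial distribution m and transition kernel p, i.e., ν assigns to (s₁,…,sₙ) the probability m(s₁)·p(s₂|s₁)·⋯·p(sₙ|sₙ₋₁); (P3) for every k ≤ n, the law of the pair (s_k,t_k) under ν is μ; (P4) for every k ≤ n and every history (t₁,…,t_k) with positive ν-probability, the conditional law of s_k given (t₁,…,t_k) is μ(·|t_k); (P1) for every k < n, conditional on s_k, the vector (t₁,…,t_k) is independent of (s_{k+1},…,sₙ) under ν. -/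

import Mathlib

open Finset

/-- `μ` is a probability distribution on `S × S` whose two marginals both equal `m`. -/
def IsCopula {S : Type*} [Fintype S] (m : S → ℝ) (μ : S × S → ℝ) : Prop :=
  (∀ q, 0 ≤ μ q) ∧ (∑ q : S × S, μ q = 1) ∧
    (∀ s, ∑ a, μ (s, a) = m s) ∧ (∀ a, ∑ s, μ (s, a) = m a)

/-- The law of the `n`-step Markov chain with initial distribution `m` and transition
kernel `p` (where `p s s'` is the probability of moving from `s` to `s'`):
`markov p m n hn w = m(w₀)·p(w₁|w₀)·⋯·p(w_{n-1}|w_{n-2})`. -/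
def markov {S : Type*} (p : S → S → ℝ) (m : S → ℝ) (n : ℕ) (hn : 1 ≤ n)
    (w : Fin n → S) : ℝ :=
  m (w ⟨0, hn⟩) * ∏ i : Fin (n - 1),
    p (w ⟨i.1, by have := i.2; omega⟩) (w ⟨i.1 + 1, by have := i.2; omega⟩)

namespace Stmt8Aux

variable {S : Type*} [Fintype S] [DecidableEq S]
variable (p : S → S → ℝ) (m : S → ℝ) (μ : S × S → ℝ)

/-- `D s' t = ∑ s, μ(s|t) p(s'|s)`. -/
noncomputable def Dfun (s' t : S) : ℝ := ∑ s, μ (s, t) / m t * p s s'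

/-- transition kernel on pairs -/
noncomputable def Qk (x y : S × S) : ℝ :=
  p x.1 y.1 * (μ y / m y.2 * p x.2 y.2 / Dfun p m μ y.1 x.2)

/-- markov chain law on a ℕ-indexed sequence -/
noncomputable def Mt (ts : ℕ → S) (j : ℕ) : ℝ :=
  m (ts 0) * ∏ i ∈ Finset.range j, p (ts i) (ts (i+1))

/-- the chain measure on `Fin n → S × S` -/
noncomputable def nu (n : ℕ) (hn : 1 ≤ n) (v : Fin n → S × S) : ℝ :=
  μ (v ⟨0, hn⟩) * ∏ i : Fin (n - 1),
    Qk p m μ (v ⟨i.1, by have := i.2; omega⟩) (v ⟨i.1 + 1, by have := i.2; omega⟩)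

variable (F : ℕ → Finset (S × S))

/-- forward filtering recursion -/
noncomputable def phi : ℕ → S × S → ℝ
  | 0, x => if x ∈ F 0 then μ x else 0
  | (j+1), y => if y ∈ F (j+1) then ∑ x, phi j x * Qk p m μ x y else 0

variable {p m μ}
lemma phi_zero (x : S × S) : phi p m μ F 0 x = if x ∈ F 0 then μ x else 0 := rfl

lemma phi_succ (j : ℕ) (y : S × S) :
    phi p m μ F (j+1) y = if y ∈ F (j+1) then ∑ x, phi p m μ F j x * Qk p m μ x y else 0 := rfl

variable (hp0 : ∀ s s', 0 ≤ p s s') (hp1 : ∀ s, ∑ s', p s s' = 1)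
    (hm : ∀ s, 0 < m s) (hμ0 : ∀ q, 0 ≤ μ q)
    (hP : ∀ s' t : S, ∑ s, μ (s, t) / m t * p s s' = ∑ t', μ (s', t') / m t' * p t t')
    (hstat : ∀ s', ∑ s, m s * p s s' = m s')

section basic
include hp0 hm hμ0

lemma D_nonneg (s' t : S) : 0 ≤ Dfun p m μ s' t :=
  Finset.sum_nonneg fun s _ => mul_nonneg (div_nonneg (hμ0 _) (hm t).le) (hp0 _ _)

lemma Qk_nonneg (x y : S × S) : 0 ≤ Qk p m μ x y :=
  mul_nonneg (hp0 _ _) (div_nonneg (mul_nonneg (div_nonneg (hμ0 _) (hm _).le) (hp0 _ _))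
    (D_nonneg hp0 hm hμ0 _ _))

end basic

lemma Qk_eq_zero (x y : S × S) (h : μ y = 0) : Qk p m μ x y = 0 := by
  simp [Qk, h]

include hp0 hm hμ0 hP in
/-- weighted row sum -/
lemma Qrow (s t s' : S) (hpos : 0 < μ (s, t)) :
    ∑ t', Qk p m μ (s, t) (s', t') = p s s' := by
  have hD : Dfun p m μ s' t = ∑ t', μ (s', t') / m t' * p t t' := hP s' t
  rcases eq_or_ne (Dfun p m μ s' t) 0 with h0 | h0
  · have hterm : μ (s, t) / m t * p s s' = 0 := by
      have := (Finset.sum_eq_zero_iff_of_nonneg (fun s _ =>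
        mul_nonneg (div_nonneg (hμ0 _) (hm t).le) (hp0 _ _))).mp h0 s (mem_univ s)
      exact this
    have hp' : p s s' = 0 := by
      rcases mul_eq_zero.mp hterm with h | h
      · exact absurd h (div_pos hpos (hm t)).ne'
      · exact h
    simp only [Qk, h0, div_zero, mul_zero]
    simp [hp']
  · simp only [Qk]
    rw [← Finset.mul_sum]
    rw [show (∑ t', μ (s', t') / m t' * p t t' / Dfun p m μ s' t)
        = (∑ t', μ (s', t') / m t' * p t t') / Dfun p m μ s' t by rw [Finset.sum_div],
      ← hD, div_self h0, mul_one]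

include hp0 hp1 hm hμ0 hP in
lemma Qrow_total (x : S × S) (hpos : 0 < μ x) : ∑ y : S × S, Qk p m μ x y = 1 := by
  rw [Fintype.sum_prod_type]
  obtain ⟨s, t⟩ := x
  calc ∑ s' : S, ∑ t' : S, Qk p m μ (s, t) (s', t')
      = ∑ s' : S, p s s' := by
        refine Finset.sum_congr rfl fun s' _ => Qrow hp0 hm hμ0 hP s t s' hpos
    _ = 1 := hp1 s

include hp0 hm hμ0 hP in
/-- The key filtering identity. -/
lemma key (t s' t' : S) :
    ∑ s, μ (s, t) * Qk p m μ (s, t) (s', t')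
      = μ (s', t') / m t' * p t t' * m t := by
  have hsum : ∑ s, μ (s, t) * p s s' = m t * Dfun p m μ s' t := by
    rw [Dfun, Finset.mul_sum]
    refine Finset.sum_congr rfl fun s _ => ?_
    rw [div_mul_eq_mul_div, mul_div_assoc', mul_comm (m t), mul_div_assoc,
      div_self (hm t).ne', mul_one]
  have hrw : ∑ s, μ (s, t) * Qk p m μ (s, t) (s', t')
      = (∑ s, μ (s, t) * p s s') * (μ (s', t') / m t' * p t t' / Dfun p m μ s' t) := by
    rw [Finset.sum_mul]
    refine Finset.sum_congr rfl fun s _ => ?_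
    simp only [Qk]; ring
  rw [hrw, hsum]
  rcases eq_or_ne (Dfun p m μ s' t) 0 with h0 | h0
  · have hD : ∑ t'', μ (s', t'') / m t'' * p t t'' = 0 := by rw [← hP s' t]; exact h0
    have hterm : μ (s', t') / m t' * p t t' = 0 :=
      (Finset.sum_eq_zero_iff_of_nonneg (fun t'' _ =>
        mul_nonneg (div_nonneg (hμ0 _) (hm t'').le) (hp0 _ _))).mp hD t' (mem_univ t')
    rw [h0, hterm]; ring
  · calc m t * Dfun p m μ s' t * (μ (s', t') / m t' * p t t' / Dfun p m μ s' t)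
        = (μ (s', t') / m t' * p t t' / Dfun p m μ s' t * Dfun p m μ s' t) * m t := by ring
      _ = μ (s', t') / m t' * p t t' * m t := by rw [div_mul_cancel₀ _ h0]

include hp0 hm hμ0 hP hstat in
/-- invariance of μ under Q -/
lemma inv (y : S × S) : ∑ x : S × S, μ x * Qk p m μ x y = μ y := by
  rw [Fintype.sum_prod_type, Finset.sum_comm]
  calc ∑ t : S, ∑ s : S, μ (s, t) * Qk p m μ (s, t) y
      = ∑ t : S, μ y / m y.2 * p t y.2 * m t := by
        refine Finset.sum_congr rfl fun t _ => ?_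
        have := key hp0 hm hμ0 hP t y.1 y.2
        simpa using this
    _ = μ y / m y.2 * ∑ t, m t * p t y.2 := by
        rw [Finset.mul_sum]; refine Finset.sum_congr rfl fun t _ => by ring
    _ = μ y := by rw [hstat y.2, div_mul_cancel₀ _ (hm y.2).ne']


section phiLemmas

include hp0 hm hμ0 in
lemma phi_nonneg : ∀ (j : ℕ) (x : S × S), 0 ≤ phi p m μ F j x
  | 0, x => by
    rw [phi_zero]; split
    · exact hμ0 x
    · exact le_rfl
  | (j+1), y => by
    rw [phi_succ]; split
    · exact Finset.sum_nonneg fun x _ =>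
        mul_nonneg (phi_nonneg j x) (Qk_nonneg hp0 hm hμ0 x y)
    · exact le_rfl

include hμ0 in
lemma phi_ne : ∀ (j : ℕ) (x : S × S), phi p m μ F j x ≠ 0 → 0 < μ x
  | 0, x, h => by
    rw [phi_zero] at h
    split at h
    · exact lt_of_le_of_ne (hμ0 x) (Ne.symm h)
    · exact absurd rfl h
  | (j+1), y, h => by
    rw [phi_succ] at h
    split at h
    · obtain ⟨x, -, hx⟩ := Finset.exists_ne_zero_of_sum_ne_zero h
      have hQ : Qk p m μ x y ≠ 0 := fun h0 => hx (by rw [h0, mul_zero])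
      have : μ y ≠ 0 := fun h0 => hQ (Qk_eq_zero x y h0)
      exact lt_of_le_of_ne (hμ0 y) (Ne.symm this)
    · exact absurd rfl h

lemma phi_congr (F' : ℕ → Finset (S × S)) :
    ∀ (j : ℕ), (∀ i, i ≤ j → F i = F' i) → ∀ x, phi p m μ F j x = phi p m μ F' j x
  | 0, h, x => by rw [phi_zero, phi_zero, h 0 le_rfl]
  | (j+1), h, y => by
    rw [phi_succ, phi_succ, h (j+1) le_rfl]
    congr 1
    refine Finset.sum_congr rfl fun x _ => ?_
    rw [phi_congr F' j (fun i hi => h i (hi.trans (Nat.le_succ j))) x]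

include hp0 hm hμ0 hP hstat in
lemma free_mu : ∀ (j : ℕ), (∀ i, i ≤ j → F i = Finset.univ) → ∀ x, phi p m μ F j x = μ x
  | 0, h, x => by rw [phi_zero, h 0 le_rfl]; simp
  | (j+1), h, y => by
    rw [phi_succ, h (j+1) le_rfl, if_pos (mem_univ y)]
    calc ∑ x, phi p m μ F j x * Qk p m μ x y
        = ∑ x, μ x * Qk p m μ x y := by
          refine Finset.sum_congr rfl fun x _ => ?_
          rw [free_mu j (fun i hi => h i (hi.trans (Nat.le_succ j))) x]
      _ = μ y := inv hp0 hm hμ0 hP hstat y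

include hp0 hp1 hm hμ0 hP in
lemma free_step (j : ℕ) (h : F (j+1) = Finset.univ) :
    ∑ y : S × S, phi p m μ F (j+1) y = ∑ x : S × S, phi p m μ F j x := by
  calc ∑ y : S × S, phi p m μ F (j+1) y
      = ∑ y : S × S, ∑ x, phi p m μ F j x * Qk p m μ x y := by
        refine Finset.sum_congr rfl fun y _ => ?_
        rw [phi_succ, h, if_pos (mem_univ y)]
    _ = ∑ x : S × S, phi p m μ F j x * ∑ y, Qk p m μ x y := by
        rw [Finset.sum_comm]
        exact Finset.sum_congr rfl fun x _ => by rw [Finset.mul_sum]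
    _ = ∑ x : S × S, phi p m μ F j x := by
        refine Finset.sum_congr rfl fun x _ => ?_
        rcases eq_or_ne (phi p m μ F j x) 0 with h0 | h0
        · rw [h0, zero_mul]
        · rw [Qrow_total hp0 hp1 hm hμ0 hP x (phi_ne F hμ0 j x h0), mul_one]

include hp0 hp1 hm hμ0 hP in
lemma seg_free (j : ℕ) : ∀ (d : ℕ), (∀ i, j < i → i ≤ j + d → F i = Finset.univ) →
    ∑ x : S × S, phi p m μ F (j+d) x = ∑ x : S × S, phi p m μ F j x
  | 0, _ => rfl
  | (d+1), h => by
    rw [show j + (d+1) = (j+d) + 1 from rfl,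
      free_step F hp0 hp1 hm hμ0 hP (j+d) (h _ (by omega) (by omega)),
      seg_free j d (fun i h1 h2 => h i h1 (by omega))]


include hp0 hm hμ0 hP in
lemma apat (ts : ℕ → S) :
    ∀ (j : ℕ), (∀ i, i ≤ j → F i = Finset.univ ×ˢ {ts i}) → ∀ y : S × S,
      phi p m μ F j y = if y.2 = ts j then μ y / m (ts j) * Mt p m ts j else 0
  | 0, h, y => by
    rw [phi_zero, h 0 le_rfl]
    simp only [Finset.mem_product, Finset.mem_univ, Finset.mem_singleton, true_and]
    rw [Mt, Finset.prod_range_zero, mul_one]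
    split
    · rw [div_mul_cancel₀ _ (hm (ts 0)).ne']
    · rfl
  | (j+1), h, y => by
    rw [phi_succ, h (j+1) le_rfl]
    simp only [Finset.mem_product, Finset.mem_univ, Finset.mem_singleton, true_and]
    split
    · next hy =>
      calc ∑ x, phi p m μ F j x * Qk p m μ x y
          = ∑ x : S × S, (if x.2 = ts j then μ x / m (ts j) * Mt p m ts j else 0)
              * Qk p m μ x y := by
            refine Finset.sum_congr rfl fun x _ => ?_
            rw [apat ts j (fun i hi => h i (hi.trans (Nat.le_succ j))) x]
        _ = ∑ a : S, (μ (a, ts j) / m (ts j) * Mt p m ts j) * Qk p m μ (a, ts j) y := by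
            rw [Fintype.sum_prod_type]
            refine Finset.sum_congr rfl fun a _ => ?_
            simp
        _ = (Mt p m ts j / m (ts j)) * ∑ a : S, μ (a, ts j) * Qk p m μ (a, ts j) y := by
            rw [Finset.mul_sum]
            refine Finset.sum_congr rfl fun a _ => by ring
        _ = (Mt p m ts j / m (ts j)) * (μ y / m y.2 * p (ts j) y.2 * m (ts j)) := by
            rw [show ∑ a : S, μ (a, ts j) * Qk p m μ (a, ts j) y
                = ∑ a : S, μ (a, ts j) * Qk p m μ (a, ts j) (y.1, y.2) by simp,
              key hp0 hm hμ0 hP (ts j) y.1 y.2]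
        _ = μ y / m (ts (j+1)) * Mt p m ts (j+1) := by
            rw [hy]
            calc Mt p m ts j / m (ts j)
                  * (μ y / m (ts (j+1)) * p (ts j) (ts (j+1)) * m (ts j))
                = (μ y / m (ts (j+1)) * p (ts j) (ts (j+1)))
                  * (Mt p m ts j / m (ts j) * m (ts j)) := by ring
              _ = μ y / m (ts (j+1)) * Mt p m ts (j+1) := by
                  rw [div_mul_cancel₀ _ (hm (ts j)).ne', Mt, Mt, Finset.prod_range_succ]
                  ring
    · rfl

include hp0 hp1 hm hμ0 hP in
lemma spat (j : ℕ) (c w : S) (hsupp : ∀ x : S × S, phi p m μ F j x ≠ 0 → x.1 = c)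
    (hF : F (j+1) = {w} ×ˢ Finset.univ) :
    ∑ y : S × S, phi p m μ F (j+1) y = (∑ x : S × S, phi p m μ F j x) * p c w := by
  calc ∑ y : S × S, phi p m μ F (j+1) y
      = ∑ a : S, ∑ b : S, if a = w then
          ∑ x, phi p m μ F j x * Qk p m μ x (a, b) else 0 := by
        rw [Fintype.sum_prod_type]
        refine Finset.sum_congr rfl fun a _ => Finset.sum_congr rfl fun b _ => ?_
        rw [phi_succ]
        simp only [hF, Finset.mem_product, Finset.mem_singleton, Finset.mem_univ, and_true]
    _ = ∑ b : S, ∑ x, phi p m μ F j x * Qk p m μ x (w, b) := by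
        rw [Finset.sum_comm]
        refine Finset.sum_congr rfl fun b _ => ?_
        rw [Finset.sum_ite_eq' univ w
          (fun a => ∑ x, phi p m μ F j x * Qk p m μ x (a, b)), if_pos (mem_univ w)]
    _ = ∑ x : S × S, phi p m μ F j x * ∑ b, Qk p m μ x (w, b) := by
        rw [Finset.sum_comm]
        exact Finset.sum_congr rfl fun x _ => by rw [Finset.mul_sum]
    _ = ∑ x : S × S, phi p m μ F j x * p c w := by
        refine Finset.sum_congr rfl fun x _ => ?_
        rcases eq_or_ne (phi p m μ F j x) 0 with h0 | h0
        · rw [h0, zero_mul, zero_mul]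
        · obtain ⟨s, t⟩ := x
          have hc : s = c := hsupp (s, t) h0
          rw [Qrow hp0 hm hμ0 hP s t w (phi_ne F hμ0 j (s, t) h0), hc]
    _ = (∑ x : S × S, phi p m μ F j x) * p c w := by rw [Finset.sum_mul]

lemma spat_supp (j : ℕ) (w : S) (hF : F (j+1) = {w} ×ˢ Finset.univ) :
    ∀ y : S × S, phi p m μ F (j+1) y ≠ 0 → y.1 = w := by
  intro y h
  rw [phi_succ] at h
  split at h
  · next hy =>
      rw [hF] at hy
      have := (Finset.mem_product.mp hy).1
      simpa using this
  · exact absurd rfl h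

include hp0 hp1 hm hμ0 hP in
lemma seg_s (j : ℕ) (ws : ℕ → S) (hsupp : ∀ x : S × S, phi p m μ F j x ≠ 0 → x.1 = ws j) :
    ∀ (d : ℕ), (∀ i, j < i → i ≤ j + d → F i = {ws i} ×ˢ Finset.univ) →
    ∑ x : S × S, phi p m μ F (j+d) x
      = (∑ x : S × S, phi p m μ F j x) * ∏ i ∈ Finset.range d, p (ws (j+i)) (ws (j+i+1))
  | 0, _ => by simp
  | (d+1), h => by
    have hFd : F (j+d+1) = {ws (j+d+1)} ×ˢ Finset.univ := h _ (by omega) (by omega)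
    have ih := seg_s j ws hsupp d (fun i h1 h2 => h i h1 (by omega))
    have hsupp' : ∀ x : S × S, phi p m μ F (j+d) x ≠ 0 → x.1 = ws (j+d) := by
      cases d with
      | zero => exact hsupp
      | succ d' => exact spat_supp F (j+d') (ws (j+d'+1)) (h _ (by omega) (by omega))
    rw [show j + (d+1) = (j+d) + 1 from rfl,
      spat F hp0 hp1 hm hμ0 hP (j+d) (ws (j+d)) (ws (j+d+1)) hsupp' hFd, ih,
      Finset.prod_range_succ]
    rw [show j + d + 1 = j + (d+1) from rfl]
    ring

end phiLemmas

section bridge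

lemma snoc_lt {n : ℕ} (u : Fin n → S × S) (y : S × S) (k : ℕ) (hk : k < n)
    (hk' : k < n + 1) : Fin.snoc (α := fun _ => S × S) u y ⟨k, hk'⟩ = u ⟨k, hk⟩ := by
  have h : (⟨k, hk'⟩ : Fin (n+1)) = Fin.castSucc ⟨k, hk⟩ := rfl
  rw [h, Fin.snoc_castSucc]

lemma snoc_last' {n : ℕ} (u : Fin n → S × S) (y : S × S) (hk' : n < n + 1) :
    Fin.snoc (α := fun _ => S × S) u y ⟨n, hk'⟩ = y := by
  have h : (⟨n, hk'⟩ : Fin (n+1)) = Fin.last n := rfl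
  rw [h, Fin.snoc_last]

lemma nu_snoc (n : ℕ) (hn : 1 ≤ n) (hn' : 1 ≤ n + 1) (u : Fin n → S × S) (y : S × S) :
    nu p m μ (n+1) hn' (Fin.snoc u y)
      = nu p m μ n hn u * Qk p m μ (u ⟨n-1, by omega⟩) y := by
  obtain ⟨d, rfl⟩ : ∃ d, n = d + 1 := ⟨n - 1, by omega⟩
  rw [nu, nu]
  show μ (Fin.snoc (α := fun _ => S × S) u y ⟨0, hn'⟩)
      * ∏ i : Fin (d+1), Qk p m μ
        (Fin.snoc (α := fun _ => S × S) u y ⟨i.1, by have := i.2; omega⟩)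
        (Fin.snoc (α := fun _ => S × S) u y ⟨i.1 + 1, by have := i.2; omega⟩)
    = (μ (u ⟨0, hn⟩) * ∏ i : Fin d, Qk p m μ (u ⟨i.1, by have := i.2; omega⟩)
        (u ⟨i.1 + 1, by have := i.2; omega⟩)) * Qk p m μ (u ⟨d, by omega⟩) y
  rw [Fin.prod_univ_castSucc]
  rw [snoc_lt u y 0 (by omega) (by omega)]
  rw [mul_assoc]
  congr 1
  congr 1
  · refine Finset.prod_congr rfl fun i _ => ?_
    have e1 : Fin.snoc (α := fun _ => S × S) u y ⟨(Fin.castSucc i).1, by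
        have := (Fin.castSucc i).2; omega⟩ = u ⟨i.1, by have := i.2; omega⟩ := by
      have hv : (Fin.castSucc i).1 = i.1 := rfl
      exact snoc_lt u y _ (Fin.castSucc i).2 _
    have e2 : Fin.snoc (α := fun _ => S × S) u y ⟨(Fin.castSucc i).1 + 1, by
        have := (Fin.castSucc i).2; omega⟩ = u ⟨i.1 + 1, by have := i.2; omega⟩ := by
      exact snoc_lt u y _ (by simp only [Fin.coe_castSucc]; omega) _
    rw [e1, e2]
  · have e1 : Fin.snoc (α := fun _ => S × S) u y ⟨(Fin.last d).1, by
        have := (Fin.last d).2; omega⟩ = u ⟨d, by omega⟩ := by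
      exact snoc_lt u y _ (by omega) _
    have e2 : Fin.snoc (α := fun _ => S × S) u y ⟨(Fin.last d).1 + 1, by
        have := (Fin.last d).2; omega⟩ = y := by
      exact snoc_last' u y _
    rw [e1, e2]

lemma forall_snoc {n : ℕ} (u : Fin n → S × S) (y : S × S) :
    (∀ i : Fin (n+1), Fin.snoc (α := fun _ => S × S) u y i ∈ F i.1)
      ↔ (∀ i : Fin n, u i ∈ F i.1) ∧ y ∈ F n := by
  constructor
  · intro h
    refine ⟨fun i => ?_, ?_⟩
    · have := h (Fin.castSucc i)
      rwa [Fin.snoc_castSucc] at this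
    · have := h (Fin.last n)
      rwa [Fin.snoc_last] at this
  · rintro ⟨h1, h2⟩ i
    induction i using Fin.lastCases with
    | last => rw [Fin.snoc_last]; exact h2
    | cast j => rw [Fin.snoc_castSucc]; exact h1 j

lemma bridge : ∀ (n : ℕ) (hn : 1 ≤ n) (x : S × S),
    (∑ v : Fin n → S × S, if (∀ i : Fin n, v i ∈ F i.1) ∧ v ⟨n-1, by omega⟩ = x
      then nu p m μ n hn v else 0) = phi p m μ F (n-1) x
  | 1, hn, x => by
    rw [← Equiv.sum_comp (Equiv.funUnique (Fin 1) (S × S)).symm]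
    calc ∑ y : S × S, (if (∀ i : Fin 1, (Equiv.funUnique (Fin 1) (S × S)).symm y i ∈ F i.1)
            ∧ (Equiv.funUnique (Fin 1) (S × S)).symm y ⟨0, by omega⟩ = x
          then nu p m μ 1 hn ((Equiv.funUnique (Fin 1) (S × S)).symm y) else 0)
        = ∑ y : S × S, (if y = x then (if x ∈ F 0 then μ x else 0) else 0) := by
          refine Finset.sum_congr rfl fun y _ => ?_
          by_cases hy : y = x
          · subst hy
            have hcond : (∀ i : Fin 1, (Equiv.funUnique (Fin 1) (S × S)).symm y i ∈ F i.1)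
                ↔ y ∈ F 0 := by
              constructor
              · intro h; exact h 0
              · intro h i
                have hi : i.1 = 0 := by omega
                show y ∈ F i.1
                rw [hi]; exact h
            have hval : nu p m μ 1 hn ((Equiv.funUnique (Fin 1) (S × S)).symm y) = μ y := by
              rw [nu]; simp
            rw [if_pos rfl]
            by_cases hF0 : y ∈ F 0
            · rw [if_pos ⟨hcond.mpr hF0, rfl⟩, hval, if_pos hF0]
            · rw [if_neg (fun hc => hF0 (hcond.mp hc.1)), if_neg hF0]
          · rw [if_neg (fun hc => hy hc.2), if_neg hy]
      _ = if x ∈ F 0 then μ x else 0 := by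
          rw [Finset.sum_ite_eq' Finset.univ x (fun _ => if x ∈ F 0 then μ x else 0),
            if_pos (mem_univ x)]
      _ = phi p m μ F 0 x := (phi_zero F x).symm
  | (n+2), hn, x => by
    have hN : 1 ≤ n + 1 := by omega
    have IH := bridge (n+1) hN
    rw [← Equiv.sum_comp (Fin.snocEquiv (fun _ : Fin (n+2) => S × S))]
    rw [Fintype.sum_prod_type]
    trans (∑ y : S × S, if y = x then (if y ∈ F (n+1) then
        ∑ u : Fin (n+1) → S × S, (if (∀ i : Fin (n+1), u i ∈ F i.1)
          then nu p m μ (n+1) hN u * Qk p m μ (u ⟨n, by omega⟩) y else 0) else 0) else 0)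
    · refine Finset.sum_congr rfl fun y _ => ?_
      trans (∑ u : Fin (n+1) → S × S, if y = x then (if y ∈ F (n+1) then
          (if (∀ i : Fin (n+1), u i ∈ F i.1)
            then nu p m μ (n+1) hN u * Qk p m μ (u ⟨n, by omega⟩) y else 0) else 0) else 0)
      · refine Finset.sum_congr rfl fun u _ => ?_
        have hsn : Fin.snocEquiv (fun _ : Fin (n+2) => S × S) (y, u) = Fin.snoc u y := rfl
        rw [hsn]
        have hl : Fin.snoc (α := fun _ => S × S) u y ⟨n+2-1, by omega⟩ = y := snoc_last' u y (by omega)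
        by_cases hy : y = x
        · by_cases hF : y ∈ F (n+1)
          · by_cases hA : ∀ i : Fin (n+1), u i ∈ F i.1
            · rw [if_pos ⟨(forall_snoc F u y).mpr ⟨hA, hF⟩, hl.trans hy⟩,
                if_pos hy, if_pos hF, if_pos hA, nu_snoc (n+1) hN hn u y]
              rfl
            · rw [if_neg (fun hc => hA ((forall_snoc F u y).mp hc.1).1),
                if_pos hy, if_pos hF, if_neg hA]
          · rw [if_neg (fun hc => hF ((forall_snoc F u y).mp hc.1).2),
              if_pos hy, if_neg hF]
        · rw [if_neg (fun hc => hy (hl.symm.trans hc.2)), if_neg hy]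
      · by_cases hy : y = x
        · rw [if_pos hy]
          by_cases hF : y ∈ F (n+1)
          · rw [if_pos hF]
            exact Finset.sum_congr rfl fun u _ => by rw [if_pos hy, if_pos hF]
          · rw [if_neg hF]
            exact Finset.sum_eq_zero fun u _ => by rw [if_pos hy, if_neg hF]
        · rw [if_neg hy]
          exact Finset.sum_eq_zero fun u _ => by rw [if_neg hy]
    · rw [Finset.sum_ite_eq' Finset.univ x, if_pos (mem_univ x)]
      have key2 : (∑ u : Fin (n+1) → S × S, (if (∀ i : Fin (n+1), u i ∈ F i.1)
            then nu p m μ (n+1) hN u * Qk p m μ (u ⟨n, by omega⟩) x else 0))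
          = ∑ x' : S × S, phi p m μ F n x' * Qk p m μ x' x := by
        trans (∑ u : Fin (n+1) → S × S, ∑ x' : S × S,
            (if (∀ i : Fin (n+1), u i ∈ F i.1) ∧ u ⟨n, by omega⟩ = x'
              then nu p m μ (n+1) hN u else 0) * Qk p m μ x' x)
        · refine Finset.sum_congr rfl fun u _ => ?_
          by_cases hA : ∀ i : Fin (n+1), u i ∈ F i.1
          · rw [if_pos hA]
            rw [show (∑ x' : S × S,
                (if (∀ i : Fin (n+1), u i ∈ F i.1) ∧ u ⟨n, by omega⟩ = x'
                  then nu p m μ (n+1) hN u else 0) * Qk p m μ x' x)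
                = ∑ x' : S × S, (if u ⟨n, by omega⟩ = x'
                  then nu p m μ (n+1) hN u * Qk p m μ x' x else 0) from
              Finset.sum_congr rfl fun x' _ => by
                by_cases hx' : u ⟨n, by omega⟩ = x'
                · rw [if_pos ⟨hA, hx'⟩, if_pos hx']
                · rw [if_neg (fun hc : (∀ i : Fin (n+1), u i ∈ F i.1)
                      ∧ u ⟨n, by omega⟩ = x' => hx' hc.2), if_neg hx', zero_mul]]
            rw [Finset.sum_ite_eq Finset.univ (u ⟨n, by omega⟩)
              (fun x' => nu p m μ (n+1) hN u * Qk p m μ x' x), if_pos (mem_univ _)]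
          · rw [if_neg hA]
            refine (Finset.sum_eq_zero fun x' _ => ?_).symm
            exact by
              rw [if_neg (fun hc : (∀ i : Fin (n+1), u i ∈ F i.1) ∧ _ => hA hc.1), zero_mul]
        · rw [Finset.sum_comm]
          refine Finset.sum_congr rfl fun x' _ => ?_
          rw [← Finset.sum_mul]
          congr 1
          exact IH x'
      have hps : phi p m μ F (n+2-1) x
          = if x ∈ F (n+1) then ∑ x' : S × S, phi p m μ F n x' * Qk p m μ x' x else 0 :=
        phi_succ F n x
      rw [key2, hps]


include hp0 hm hμ0 in
lemma tot (n : ℕ) (hn : 1 ≤ n) :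
    (∑ v : Fin n → S × S, if (∀ i : Fin n, v i ∈ F i.1) then nu p m μ n hn v else 0)
      = ∑ x : S × S, phi p m μ F (n-1) x := by
  trans (∑ v : Fin n → S × S, ∑ x : S × S,
      if (∀ i : Fin n, v i ∈ F i.1) ∧ v ⟨n-1, by omega⟩ = x then nu p m μ n hn v else 0)
  · refine Finset.sum_congr rfl fun v _ => ?_
    by_cases hC : ∀ i : Fin n, v i ∈ F i.1
    · rw [if_pos hC]
      rw [show (∑ x : S × S, if (∀ i : Fin n, v i ∈ F i.1) ∧ v ⟨n-1, by omega⟩ = x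
            then nu p m μ n hn v else 0)
          = ∑ x : S × S, if v ⟨n-1, by omega⟩ = x then nu p m μ n hn v else 0 from
        Finset.sum_congr rfl fun x _ => by
          by_cases hx : v ⟨n-1, by omega⟩ = x
          · rw [if_pos ⟨hC, hx⟩, if_pos hx]
          · rw [if_neg (fun hc : (∀ i : Fin n, v i ∈ F i.1) ∧ _ => hx hc.2), if_neg hx]]
      rw [Finset.sum_ite_eq Finset.univ (v ⟨n-1, by omega⟩) (fun _ => nu p m μ n hn v),
        if_pos (mem_univ _)]
    · rw [if_neg hC]
      refine (Finset.sum_eq_zero fun x _ => ?_).symm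
      rw [if_neg (fun hc : (∀ i : Fin n, v i ∈ F i.1) ∧ _ => hC hc.1)]
  · rw [Finset.sum_comm]
    exact Finset.sum_congr rfl fun x _ => bridge F n hn x

end bridge

section patterns

lemma sum_pair_snd (c : S) (f : S × S → ℝ) :
    ∑ x : S × S, (if x.2 = c then f x else 0) = ∑ a : S, f (a, c) := by
  rw [Fintype.sum_prod_type]
  refine Finset.sum_congr rfl fun a _ => ?_
  rw [Finset.sum_ite_eq' Finset.univ c (fun b => f (a, b)), if_pos (mem_univ c)]

lemma sum_pair_fst (c : S) (f : S × S → ℝ) :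
    ∑ x : S × S, (if x.1 = c then f x else 0) = ∑ b : S, f (c, b) := by
  rw [Fintype.sum_prod_type]
  calc ∑ a : S, ∑ b : S, (if a = c then f (a, b) else 0)
      = ∑ a : S, (if a = c then ∑ b : S, f (a, b) else 0) := by
        refine Finset.sum_congr rfl fun a _ => ?_
        by_cases ha : a = c
        · rw [if_pos ha]; exact Finset.sum_congr rfl fun b _ => if_pos ha
        · rw [if_neg ha]; exact Finset.sum_eq_zero fun b _ => if_neg ha
    _ = ∑ b : S, f (c, b) := by
        rw [Finset.sum_ite_eq' Finset.univ c (fun a => ∑ b : S, f (a, b)),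
          if_pos (mem_univ c)]

include hp0 hm hμ0 hP hstat in
lemma phi_point (c : S × S) (k : ℕ) (hFk : F k = {c}) (hbelow : ∀ i, i < k → F i = Finset.univ) :
    ∀ x, phi p m μ F k x = if x = c then μ c else 0 := by
  intro x
  have hval : phi p m μ F k x = if x ∈ F k then μ x else 0 := by
    cases k with
    | zero => exact phi_zero F x
    | succ j =>
      rw [phi_succ]
      congr 1
      calc ∑ x', phi p m μ F j x' * Qk p m μ x' x
          = ∑ x', μ x' * Qk p m μ x' x := by
            refine Finset.sum_congr rfl fun x' _ => ?_
            rw [free_mu F hp0 hm hμ0 hP hstat j (fun i hi => hbelow i (by omega)) x']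
        _ = μ x := inv hp0 hm hμ0 hP hstat x
  rw [hval, hFk]
  by_cases hx : x = c
  · rw [if_pos (Finset.mem_singleton.mpr hx), if_pos hx, hx]
  · rw [if_neg (fun hc => hx (Finset.mem_singleton.mp hc)), if_neg hx]

lemma phi_filter (F' : ℕ → Finset (S × S)) (c : S) (k : ℕ)
    (hb : ∀ i, i < k → F' i = F i)
    (hk : ∀ y : S × S, y ∈ F' k ↔ (y.1 = c ∧ y ∈ F k)) :
    ∀ x, phi p m μ F' k x = if x.1 = c then phi p m μ F k x else 0 := by
  intro x
  cases k with
  | zero =>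
    rw [phi_zero, phi_zero]
    by_cases hx : x.1 = c
    · by_cases hm : x ∈ F 0
      · rw [if_pos ((hk x).mpr ⟨hx, hm⟩), if_pos hx, if_pos hm]
      · rw [if_neg (fun hc => hm ((hk x).mp hc).2), if_pos hx, if_neg hm]
    · rw [if_neg (fun hc => hx ((hk x).mp hc).1), if_neg hx]
  | succ j =>
    rw [phi_succ, phi_succ]
    have hsum : ∑ x', phi p m μ F' j x' * Qk p m μ x' x
        = ∑ x', phi p m μ F j x' * Qk p m μ x' x := by
      refine Finset.sum_congr rfl fun x' _ => ?_
      rw [phi_congr F' F j (fun i hi => hb i (by omega)) x']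
    rw [hsum]
    by_cases hx : x.1 = c
    · by_cases hmem : x ∈ F (j+1)
      · rw [if_pos ((hk x).mpr ⟨hx, hmem⟩), if_pos hx, if_pos hmem]
      · rw [if_neg (fun hc => hmem ((hk x).mp hc).2), if_pos hx, if_neg hmem]
    · rw [if_neg (fun hc => hx ((hk x).mp hc).1), if_neg hx]

end patterns

section embed

lemma embed_fst (n : ℕ) (w : Fin n → S) (g : (Fin n → S × S) → ℝ) :
    ∑ u : Fin n → S × S, (if (∀ i : Fin n, (u i).1 = w i) then g u else 0)
      = ∑ b : Fin n → S, g (fun i => (w i, b i)) := by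
  rw [← Equiv.sum_comp (Equiv.arrowProdEquivProdArrow (Fin n) (fun _ => S) (fun _ => S)).symm]
  rw [Fintype.sum_prod_type]
  calc ∑ a : Fin n → S, ∑ b : Fin n → S,
        (if (∀ i : Fin n, (((Equiv.arrowProdEquivProdArrow (Fin n) (fun _ => S) (fun _ => S)).symm (a, b)) i).1 = w i)
          then g ((Equiv.arrowProdEquivProdArrow (Fin n) (fun _ => S) (fun _ => S)).symm (a, b)) else 0)
      = ∑ a : Fin n → S, (if a = w then ∑ b : Fin n → S, g (fun i => (a i, b i)) else 0) := by
        refine Finset.sum_congr rfl fun a _ => ?_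
        by_cases ha : a = w
        · rw [if_pos ha]
          refine Finset.sum_congr rfl fun b _ => ?_
          have hc : ∀ i : Fin n,
              (((Equiv.arrowProdEquivProdArrow (Fin n) (fun _ => S) (fun _ => S)).symm (a, b)) i).1 = w i :=
            fun i => congrFun ha i
          rw [if_pos hc]
          rfl
        · rw [if_neg ha]
          refine Finset.sum_eq_zero fun b _ => ?_
          have hc : ¬ ∀ i : Fin n,
              (((Equiv.arrowProdEquivProdArrow (Fin n) (fun _ => S) (fun _ => S)).symm (a, b)) i).1 = w i :=
            fun hc => ha (funext fun i => hc i)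
          rw [if_neg hc]
    _ = ∑ b : Fin n → S, g (fun i => (w i, b i)) := by
        rw [Finset.sum_ite_eq' Finset.univ w
          (fun a => ∑ b : Fin n → S, g (fun i => (a i, b i))), if_pos (mem_univ w)]

lemma embed_snd (n : ℕ) (w : Fin n → S) (g : (Fin n → S × S) → ℝ) :
    ∑ u : Fin n → S × S, (if (∀ i : Fin n, (u i).2 = w i) then g u else 0)
      = ∑ b : Fin n → S, g (fun i => (b i, w i)) := by
  rw [← Equiv.sum_comp (Equiv.arrowProdEquivProdArrow (Fin n) (fun _ => S) (fun _ => S)).symm]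
  rw [Fintype.sum_prod_type]
  rw [Finset.sum_comm]
  calc ∑ b : Fin n → S, ∑ a : Fin n → S,
        (if (∀ i : Fin n, (((Equiv.arrowProdEquivProdArrow (Fin n) (fun _ => S) (fun _ => S)).symm (a, b)) i).2 = w i)
          then g ((Equiv.arrowProdEquivProdArrow (Fin n) (fun _ => S) (fun _ => S)).symm (a, b)) else 0)
      = ∑ b : Fin n → S, (if b = w then ∑ a : Fin n → S, g (fun i => (a i, b i)) else 0) := by
        refine Finset.sum_congr rfl fun b _ => ?_
        by_cases hb : b = w
        · rw [if_pos hb]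
          refine Finset.sum_congr rfl fun a _ => ?_
          have hc : ∀ i : Fin n,
              (((Equiv.arrowProdEquivProdArrow (Fin n) (fun _ => S) (fun _ => S)).symm (a, b)) i).2 = w i :=
            fun i => congrFun hb i
          rw [if_pos hc]
          rfl
        · rw [if_neg hb]
          refine Finset.sum_eq_zero fun a _ => ?_
          have hc : ¬ ∀ i : Fin n,
              (((Equiv.arrowProdEquivProdArrow (Fin n) (fun _ => S) (fun _ => S)).symm (a, b)) i).2 = w i :=
            fun hc => hb (funext fun i => hc i)
          rw [if_neg hc]
    _ = ∑ a : Fin n → S, g (fun i => (a i, w i)) := by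
        rw [Finset.sum_ite_eq' Finset.univ w
          (fun b => ∑ a : Fin n → S, g (fun i => (a i, b i))), if_pos (mem_univ w)]

lemma mt_markov (n : ℕ) (hn : 1 ≤ n) (w : Fin n → S) (we : ℕ → S)
    (hwe : ∀ (i : ℕ) (h : i < n), we i = w ⟨i, h⟩) :
    Mt p m we (n-1) = markov p m n hn w := by
  rw [Mt, markov, hwe 0 (by omega)]
  congr 1
  rw [← Fin.prod_univ_eq_prod_range (fun i => p (we i) (we (i+1))) (n-1)]
  refine Finset.prod_congr rfl fun i _ => ?_
  have h1 : i.1 < n := by have := i.2; omega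
  have h2 : i.1 + 1 < n := by have := i.2; omega
  rw [hwe i.1 h1, hwe (i.1+1) h2]

end embed

section mainPatterns

def Fall : ℕ → Finset (S × S) := fun _ => Finset.univ
def F2s (ws : ℕ → S) : ℕ → Finset (S × S) := fun i => {ws i} ×ˢ Finset.univ
def F2t (ts : ℕ → S) : ℕ → Finset (S × S) := fun i => Finset.univ ×ˢ {ts i}
def F3 (c : S × S) (k : ℕ) : ℕ → Finset (S × S) := fun i => if i = k then {c} else Finset.univ
def F4d (k : ℕ) (ts : ℕ → S) : ℕ → Finset (S × S) :=
  fun i => if i ≤ k then Finset.univ ×ˢ {ts i} else Finset.univ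
def F4n (k : ℕ) (ts : ℕ → S) (s : S) : ℕ → Finset (S × S) :=
  fun i => if i = k then {s} ×ˢ {ts i} else F4d k ts i
def FL1 (k : ℕ) (ts ws : ℕ → S) (s : S) : ℕ → Finset (S × S) :=
  fun i => if i = k then {s} ×ˢ {ts i}
    else if i ≤ k then Finset.univ ×ˢ {ts i} else {ws i} ×ˢ Finset.univ
def FL2 (k : ℕ) (s : S) : ℕ → Finset (S × S) :=
  fun i => if i = k then {s} ×ˢ Finset.univ else Finset.univ
def FR2 (k : ℕ) (ws : ℕ → S) (s : S) : ℕ → Finset (S × S) :=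
  fun i => if i = k then {s} ×ˢ Finset.univ
    else if i ≤ k then Finset.univ else {ws i} ×ˢ Finset.univ

end mainPatterns

end Stmt8Aux



/- `ν v` is the probability that the sequence of pairs `((s₁,t₁),…,(sₙ,tₙ))` equals `v`,
with `(v i).1 = sᵢ` the true state and `(v i).2 = tᵢ` the fictitious state. -/
open Stmt8Aux in
theorem stmt8 {S : Type*} [Fintype S] [DecidableEq S] [Nonempty S]
    (p : S → S → ℝ) (hp0 : ∀ s s', 0 ≤ p s s') (hp1 : ∀ s, ∑ s', p s s' = 1)
    (m : S → ℝ) (hm : ∀ s, 0 < m s) (hm1 : ∑ s, m s = 1)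
    (hstat : ∀ s', ∑ s, m s * p s s' = m s')
    (μ : S × S → ℝ) (hμ : IsCopula m μ)
    (hP : ∀ s' t : S, ∑ s, μ (s, t) / m t * p s s' = ∑ t', μ (s', t') / m t' * p t t')
    (n : ℕ) (hn : 1 ≤ n) :
    ∃ ν : (Fin n → S × S) → ℝ,
      (∀ v, 0 ≤ ν v) ∧ (∑ v, ν v = 1) ∧
      -- P2 : the sequence of fictitious states has the same law as the sequence of true
      -- states, and both laws are the `n`-step Markov chain law.
      (∀ w : Fin n → S,
        (∑ v : Fin n → S, ν (fun i => (w i, v i)) = markov p m n hn w) ∧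
        (∑ v : Fin n → S, ν (fun i => (v i, w i)) = markov p m n hn w)) ∧
      -- P3 : the law of the pair `(s_k, t_k)` is `μ`.
      (∀ k : Fin n, ∀ s t : S,
        ∑ v ∈ Finset.univ.filter (fun v : Fin n → S × S => v k = (s, t)), ν v
          = μ (s, t)) ∧
      -- P4 : the conditional law of `s_k` given `(t₁,…,t_k)` is `μ(· | t_k)`.
      (∀ k : Fin n, ∀ ts : Fin n → S,
        0 < (∑ v ∈ Finset.univ.filter
              (fun v : Fin n → S × S => ∀ i ≤ k, (v i).2 = ts i), ν v) →
        ∀ s : S,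
          (∑ v ∈ Finset.univ.filter
              (fun v : Fin n → S × S => (∀ i ≤ k, (v i).2 = ts i) ∧ (v k).1 = s), ν v)
            = μ (s, ts k) / m (ts k) *
              ∑ v ∈ Finset.univ.filter
                (fun v : Fin n → S × S => ∀ i ≤ k, (v i).2 = ts i), ν v) ∧
      -- P1 : conditionally on `s_k`, the vector `(t₁,…,t_k)` is independent of the
      -- future states `(s_{k+1},…,sₙ)`.
      (∀ k : Fin n, ∀ s : S, ∀ ts ws : Fin n → S,
        (∑ v ∈ Finset.univ.filter (fun v : Fin n → S × S =>
            (v k).1 = s ∧ (∀ i ≤ k, (v i).2 = ts i) ∧ ∀ j, k < j → (v j).1 = ws j), ν v) *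
        (∑ v ∈ Finset.univ.filter (fun v : Fin n → S × S => (v k).1 = s), ν v) =
        (∑ v ∈ Finset.univ.filter (fun v : Fin n → S × S =>
            (v k).1 = s ∧ ∀ i ≤ k, (v i).2 = ts i), ν v) *
        (∑ v ∈ Finset.univ.filter (fun v : Fin n → S × S =>
            (v k).1 = s ∧ ∀ j, k < j → (v j).1 = ws j), ν v)) := by

  obtain ⟨hμ0, hμ1, hμs, hμt⟩ := hμ
  have master : ∀ (F : ℕ → Finset (S × S)) (P : (Fin n → S × S) → Prop)
      (_ : DecidablePred P), (∀ v, P v ↔ ∀ i : Fin n, v i ∈ F i.1) →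
      ∑ v ∈ Finset.univ.filter P, nu p m μ n hn v
        = ∑ x : S × S, phi p m μ F (n-1) x := by
    intro F P hdec hiff
    rw [Finset.sum_filter]
    calc ∑ v : Fin n → S × S, (if P v then nu p m μ n hn v else 0)
        = ∑ v : Fin n → S × S, (if (∀ i : Fin n, v i ∈ F i.1)
            then nu p m μ n hn v else 0) :=
          Finset.sum_congr rfl fun v _ => if_congr (hiff v) rfl rfl
      _ = ∑ x : S × S, phi p m μ F (n-1) x := tot F hp0 hm hμ0 n hn
  have segfree : ∀ (F : ℕ → Finset (S × S)) (k : ℕ), k ≤ n-1 →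
      (∀ i, k < i → F i = Finset.univ) →
      ∑ x : S × S, phi p m μ F (n-1) x = ∑ x : S × S, phi p m μ F k x := by
    intro F k hk hcond
    have h := seg_free F hp0 hp1 hm hμ0 hP k (n-1-k) (fun i h1 _ => hcond i h1)
    rwa [show k + (n-1-k) = n-1 by omega] at h
  have segs : ∀ (F : ℕ → Finset (S × S)) (k : ℕ) (ws : ℕ → S), k ≤ n-1 →
      (∀ x : S × S, phi p m μ F k x ≠ 0 → x.1 = ws k) →
      (∀ i, k < i → F i = {ws i} ×ˢ Finset.univ) →
      ∑ x : S × S, phi p m μ F (n-1) x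
        = (∑ x : S × S, phi p m μ F k x)
          * ∏ i ∈ Finset.range (n-1-k), p (ws (k+i)) (ws (k+i+1)) := by
    intro F k ws hk hsupp hcond
    have h := seg_s F hp0 hp1 hm hμ0 hP k ws hsupp (n-1-k) (fun i h1 _ => hcond i h1)
    rwa [show k + (n-1-k) = n-1 by omega] at h
  have apat_sum : ∀ (F : ℕ → Finset (S × S)) (ts : ℕ → S) (k : ℕ),
      (∀ i, i ≤ k → F i = Finset.univ ×ˢ {ts i}) →
      ∑ x : S × S, phi p m μ F k x = Mt p m ts k := by
    intro F ts k h
    calc ∑ x : S × S, phi p m μ F k x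
        = ∑ x : S × S, (if x.2 = ts k then μ x / m (ts k) * Mt p m ts k else 0) :=
          Finset.sum_congr rfl fun x _ => apat F hp0 hm hμ0 hP ts k h x
      _ = ∑ a : S, μ (a, ts k) / m (ts k) * Mt p m ts k := sum_pair_snd (ts k) _
      _ = ((∑ a : S, μ (a, ts k)) / m (ts k)) * Mt p m ts k := by
          rw [← Finset.sum_mul, ← Finset.sum_div]
      _ = Mt p m ts k := by rw [hμt (ts k), div_self (hm (ts k)).ne', one_mul]
  have apat_fil : ∀ (F : ℕ → Finset (S × S)) (ts : ℕ → S) (k : ℕ) (s : S),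
      (∀ i, i ≤ k → F i = Finset.univ ×ˢ {ts i}) →
      ∑ x : S × S, (if x.1 = s then phi p m μ F k x else 0)
        = μ (s, ts k) / m (ts k) * Mt p m ts k := by
    intro F ts k s h
    rw [sum_pair_fst s (phi p m μ F k)]
    calc ∑ b : S, phi p m μ F k (s, b)
        = ∑ b : S, (if b = ts k then μ (s, b) / m (ts k) * Mt p m ts k else 0) :=
          Finset.sum_congr rfl fun b _ => apat F hp0 hm hμ0 hP ts k h (s, b)
      _ = μ (s, ts k) / m (ts k) * Mt p m ts k := by
          rw [Finset.sum_ite_eq' Finset.univ (ts k)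
            (fun b => μ (s, b) / m (ts k) * Mt p m ts k), if_pos (mem_univ _)]
  -- the measure
  refine ⟨nu p m μ n hn, ?_, ?_, ?_, ?_, ?_, ?_⟩
  -- nonnegativity
  · intro v
    rw [nu]
    exact mul_nonneg (hμ0 _) (Finset.prod_nonneg fun i _ => Qk_nonneg hp0 hm hμ0 _ _)
  -- total mass one
  · calc ∑ v : Fin n → S × S, nu p m μ n hn v
        = ∑ v : Fin n → S × S, (if (∀ i : Fin n, v i ∈ (Fall : ℕ → Finset (S × S)) i.1)
            then nu p m μ n hn v else 0) :=
          Finset.sum_congr rfl fun v _ => (if_pos (fun i => mem_univ _)).symm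
      _ = ∑ x : S × S, phi p m μ Fall (n-1) x := tot Fall hp0 hm hμ0 n hn
      _ = ∑ x : S × S, μ x :=
          Finset.sum_congr rfl fun x _ =>
            free_mu Fall hp0 hm hμ0 hP hstat (n-1) (fun i _ => rfl) x
      _ = 1 := hμ1
  -- P2
  · intro w
    set we : ℕ → S := fun i => if h : i < n then w ⟨i, h⟩ else w ⟨0, hn⟩ with hwe_def
    have hwe : ∀ (i : ℕ) (h : i < n), we i = w ⟨i, h⟩ := fun i h => dif_pos h
    constructor
    · -- s-coordinates fixed
      rw [← embed_fst n w (nu p m μ n hn)]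
      have hsupp0 : ∀ x : S × S, phi p m μ (F2s we) 0 x ≠ 0 → x.1 = we 0 := by
        intro x hx
        rw [phi_zero] at hx
        split at hx
        · next hmem => exact by simpa using (Finset.mem_product.mp hmem).1
        · exact absurd rfl hx
      calc ∑ u : Fin n → S × S, (if (∀ i : Fin n, (u i).1 = w i) then nu p m μ n hn u else 0)
          = ∑ u : Fin n → S × S, (if (∀ i : Fin n, u i ∈ F2s we i.1)
              then nu p m μ n hn u else 0) := by
            refine Finset.sum_congr rfl fun u _ => if_congr ?_ rfl rfl
            refine forall_congr' fun i => ?_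
            rw [show F2s we i.1 = {we i.1} ×ˢ Finset.univ from rfl, Finset.mem_product]
            rw [hwe i.1 i.2]
            simp
        _ = ∑ x : S × S, phi p m μ (F2s we) (n-1) x := tot (F2s we) hp0 hm hμ0 n hn
        _ = (∑ x : S × S, phi p m μ (F2s we) 0 x)
              * ∏ i ∈ Finset.range (n-1-0), p (we (0+i)) (we (0+i+1)) :=
            segs (F2s we) 0 we (by omega) hsupp0 (fun i _ => rfl)
        _ = m (we 0) * ∏ i ∈ Finset.range (n-1), p (we i) (we (i+1)) := by
            simp only [Nat.zero_add, Nat.sub_zero]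
            congr 1
            calc ∑ x : S × S, phi p m μ (F2s we) 0 x
                = ∑ x : S × S, (if x.1 = we 0 then μ x else 0) := by
                  refine Finset.sum_congr rfl fun x _ => ?_
                  rw [phi_zero]
                  refine if_congr ?_ rfl rfl
                  rw [show F2s we 0 = {we 0} ×ˢ Finset.univ from rfl, Finset.mem_product]
                  simp
              _ = ∑ b : S, μ (we 0, b) := sum_pair_fst (we 0) μ
              _ = m (we 0) := hμs (we 0)
        _ = Mt p m we (n-1) := by rw [Mt]
        _ = markov p m n hn w := mt_markov n hn w we hwe
    · -- t-coordinates fixed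
      rw [← embed_snd n w (nu p m μ n hn)]
      calc ∑ u : Fin n → S × S, (if (∀ i : Fin n, (u i).2 = w i) then nu p m μ n hn u else 0)
          = ∑ u : Fin n → S × S, (if (∀ i : Fin n, u i ∈ F2t we i.1)
              then nu p m μ n hn u else 0) := by
            refine Finset.sum_congr rfl fun u _ => if_congr ?_ rfl rfl
            refine forall_congr' fun i => ?_
            rw [show F2t we i.1 = Finset.univ ×ˢ {we i.1} from rfl, Finset.mem_product]
            rw [hwe i.1 i.2]
            simp
        _ = ∑ x : S × S, phi p m μ (F2t we) (n-1) x := tot (F2t we) hp0 hm hμ0 n hn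
        _ = Mt p m we (n-1) := apat_sum (F2t we) we (n-1) (fun i _ => rfl)
        _ = markov p m n hn w := mt_markov n hn w we hwe
  -- P3
  · intro k s t
    have hiff : ∀ v : Fin n → S × S, v k = (s, t) ↔ ∀ i : Fin n, v i ∈ F3 (s, t) k.1 i.1 := by
      intro v
      constructor
      · intro h i
        by_cases hi : i.1 = k.1
        · have hik : i = k := Fin.ext hi
          rw [show F3 (s,t) k.1 i.1 = if i.1 = k.1 then {(s,t)} else Finset.univ from rfl,
            if_pos hi, Finset.mem_singleton, hik, h]
        · rw [show F3 (s,t) k.1 i.1 = if i.1 = k.1 then {(s,t)} else Finset.univ from rfl,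
            if_neg hi]
          exact mem_univ _
      · intro h
        have := h k
        rw [show F3 (s,t) k.1 k.1 = if k.1 = k.1 then {(s,t)} else Finset.univ from rfl,
          if_pos rfl, Finset.mem_singleton] at this
        exact this
    refine (master (F3 (s,t) k.1) _ (by infer_instance) hiff).trans ?_
    calc ∑ x : S × S, phi p m μ (F3 (s,t) k.1) (n-1) x
        = ∑ x : S × S, phi p m μ (F3 (s,t) k.1) k.1 x :=
          segfree _ k.1 (by have := k.2; omega)
            (fun i hi => by
              rw [show F3 (s,t) k.1 i = if i = k.1 then {(s,t)} else Finset.univ from rfl,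
                if_neg (by omega)])
      _ = ∑ x : S × S, (if x = (s,t) then μ (s,t) else 0) :=
          Finset.sum_congr rfl fun x _ =>
            phi_point (F3 (s,t) k.1) hp0 hm hμ0 hP hstat (s,t) k.1 (if_pos rfl)
              (fun i hi => by
                rw [show F3 (s,t) k.1 i = if i = k.1 then {(s,t)} else Finset.univ from rfl,
                  if_neg (by omega)]) x
      _ = μ (s, t) := by
          rw [Finset.sum_ite_eq' Finset.univ ((s,t) : S × S) (fun _ => μ (s,t)),
            if_pos (mem_univ _)]
  -- P4
  · intro k ts _ s
    set tse : ℕ → S := fun i => if h : i < n then ts ⟨i, h⟩ else ts k with htse_def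
    have htse : ∀ (i : ℕ) (h : i < n), tse i = ts ⟨i, h⟩ := fun i h => dif_pos h
    have heq : tse k.1 = ts k := htse k.1 k.2
    have hF4d : ∀ i, i ≤ k.1 → F4d k.1 tse i = Finset.univ ×ˢ {tse i} :=
      fun i hi => if_pos hi
    have hF4dfree : ∀ i, k.1 < i → F4d k.1 tse i = Finset.univ :=
      fun i hi => if_neg (by omega)
    have hiffden : ∀ v : Fin n → S × S,
        (∀ i ≤ k, (v i).2 = ts i) ↔ ∀ i : Fin n, v i ∈ F4d k.1 tse i.1 := by
      intro v
      constructor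
      · intro h i
        by_cases hi : i.1 ≤ k.1
        · rw [hF4d i.1 hi, Finset.mem_product, Finset.mem_singleton, htse i.1 i.2]
          exact ⟨mem_univ _, h i (Fin.le_def.mpr hi)⟩
        · rw [hF4dfree i.1 (by omega)]; exact mem_univ _
      · intro h i hik
        have := h i
        rw [hF4d i.1 (Fin.le_def.mp hik), Finset.mem_product, Finset.mem_singleton,
          htse i.1 i.2] at this
        exact this.2
    have hiffnum : ∀ v : Fin n → S × S,
        ((∀ i ≤ k, (v i).2 = ts i) ∧ (v k).1 = s)
          ↔ ∀ i : Fin n, v i ∈ F4n k.1 tse s i.1 := by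
      intro v
      constructor
      · rintro ⟨h1, h2⟩ i
        by_cases hi : i.1 = k.1
        · have hik : i = k := Fin.ext hi
          rw [show F4n k.1 tse s i.1 = if i.1 = k.1 then ({s} : Finset S) ×ˢ {tse i.1}
              else F4d k.1 tse i.1 from rfl, if_pos hi, Finset.mem_product,
            Finset.mem_singleton, Finset.mem_singleton, htse i.1 i.2, hik]
          exact ⟨h2, h1 k le_rfl⟩
        · rw [show F4n k.1 tse s i.1 = if i.1 = k.1 then ({s} : Finset S) ×ˢ {tse i.1}
              else F4d k.1 tse i.1 from rfl, if_neg hi]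
          exact (hiffden v).mp h1 i
      · intro h
        constructor
        · intro i hik
          have := h i
          by_cases hi : i.1 = k.1
          · rw [show F4n k.1 tse s i.1 = if i.1 = k.1 then ({s} : Finset S) ×ˢ {tse i.1}
                else F4d k.1 tse i.1 from rfl, if_pos hi, Finset.mem_product,
              Finset.mem_singleton, Finset.mem_singleton, htse i.1 i.2] at this
            exact this.2
          · rw [show F4n k.1 tse s i.1 = if i.1 = k.1 then ({s} : Finset S) ×ˢ {tse i.1}
                else F4d k.1 tse i.1 from rfl, if_neg hi,
              hF4d i.1 (Fin.le_def.mp hik), Finset.mem_product, Finset.mem_singleton,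
              htse i.1 i.2] at this
            exact this.2
        · have := h k
          rw [show F4n k.1 tse s k.1 = if k.1 = k.1 then ({s} : Finset S) ×ˢ {tse k.1}
              else F4d k.1 tse k.1 from rfl, if_pos rfl, Finset.mem_product,
            Finset.mem_singleton] at this
          exact this.1
    have hden : (∑ v ∈ Finset.univ.filter
          (fun v : Fin n → S × S => ∀ i ≤ k, (v i).2 = ts i), nu p m μ n hn v)
        = Mt p m tse k.1 := by
      refine (master (F4d k.1 tse) _ (by infer_instance) hiffden).trans ?_
      refine (segfree _ k.1 (by have := k.2; omega) hF4dfree).trans ?_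
      exact apat_sum _ tse k.1 hF4d
    have hnum : (∑ v ∈ Finset.univ.filter
          (fun v : Fin n → S × S => (∀ i ≤ k, (v i).2 = ts i) ∧ (v k).1 = s), nu p m μ n hn v)
        = μ (s, tse k.1) / m (tse k.1) * Mt p m tse k.1 := by
      refine (master (F4n k.1 tse s) _ (by infer_instance) hiffnum).trans ?_
      refine (segfree _ k.1 (by have := k.2; omega) (fun i hi => by
        rw [show F4n k.1 tse s i = if i = k.1 then ({s} : Finset S) ×ˢ {tse i}
            else F4d k.1 tse i from rfl, if_neg (by omega), hF4dfree i hi])).trans ?_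
      refine Eq.trans ?_ (apat_fil (F4d k.1 tse) tse k.1 s hF4d)
      refine Finset.sum_congr rfl fun x _ => ?_
      refine phi_filter (F4d k.1 tse) (F4n k.1 tse s) s k.1
        (fun i hi => by
          rw [show F4n k.1 tse s i = if i = k.1 then ({s} : Finset S) ×ˢ {tse i}
              else F4d k.1 tse i from rfl, if_neg (by omega)])
        (fun y => by
          rw [show F4n k.1 tse s k.1 = if k.1 = k.1 then ({s} : Finset S) ×ˢ {tse k.1}
              else F4d k.1 tse k.1 from rfl, if_pos rfl, hF4d k.1 le_rfl,
            Finset.mem_product, Finset.mem_product, Finset.mem_singleton]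
          constructor
          · rintro ⟨h1, h2⟩; exact ⟨h1, mem_univ _, h2⟩
          · rintro ⟨h1, _, h2⟩; exact ⟨h1, h2⟩) x
    rw [hden, hnum, heq]
  -- P1
  · intro k s ts ws
    set tse : ℕ → S := fun i => if h : i < n then ts ⟨i, h⟩ else ts k with htse_def
    have htse : ∀ (i : ℕ) (h : i < n), tse i = ts ⟨i, h⟩ := fun i h => dif_pos h
    set wse : ℕ → S := fun i => if h : i < n then ws ⟨i, h⟩ else ws k with hwse_def
    have hwse : ∀ (i : ℕ) (h : i < n), wse i = ws ⟨i, h⟩ := fun i h => dif_pos h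
    set ws' : ℕ → S := fun i => if i ≤ k.1 then s else wse i with hws'_def
    have hws'k : ws' k.1 = s := if_pos le_rfl
    have hws' : ∀ i, k.1 < i → ws' i = wse i := fun i hi => if_neg (by omega)
    have hF4d : ∀ i, i ≤ k.1 → F4d k.1 tse i = Finset.univ ×ˢ {tse i} :=
      fun i hi => if_pos hi
    have hF4dfree : ∀ i, k.1 < i → F4d k.1 tse i = Finset.univ :=
      fun i hi => if_neg (by omega)
    have hkn : k.1 ≤ n - 1 := by have := k.2; omega
    -- pattern unfolding lemmas
    have hFL1 : ∀ i, FL1 k.1 tse ws' s i = if i = k.1 then ({s} : Finset S) ×ˢ {tse i}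
        else if i ≤ k.1 then Finset.univ ×ˢ {tse i} else {ws' i} ×ˢ Finset.univ :=
      fun i => rfl
    have hF4n : ∀ i, F4n k.1 tse s i = if i = k.1 then ({s} : Finset S) ×ˢ {tse i}
        else F4d k.1 tse i := fun i => rfl
    have hFL2 : ∀ i, FL2 k.1 s i = if i = k.1 then ({s} : Finset S) ×ˢ Finset.univ
        else Finset.univ := fun i => rfl
    have hFR2 : ∀ i, FR2 k.1 ws' s i = if i = k.1 then ({s} : Finset S) ×ˢ Finset.univ
        else if i ≤ k.1 then Finset.univ else {ws' i} ×ˢ Finset.univ := fun i => rfl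
    -- filter representations at level k
    have hbnum : ∀ i, i < k.1 → F4n k.1 tse s i = F4d k.1 tse i :=
      fun i hi => by rw [hF4n, if_neg (by omega)]
    have hknum : ∀ y : S × S, y ∈ F4n k.1 tse s k.1 ↔ (y.1 = s ∧ y ∈ F4d k.1 tse k.1) := by
      intro y
      rw [hF4n, if_pos rfl, hF4d k.1 le_rfl, Finset.mem_product, Finset.mem_product,
        Finset.mem_singleton]
      constructor
      · rintro ⟨h1, h2⟩; exact ⟨h1, mem_univ _, h2⟩
      · rintro ⟨h1, _, h2⟩; exact ⟨h1, h2⟩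
    have hrepN : ∀ x : S × S, phi p m μ (F4n k.1 tse s) k.1 x
        = if x.1 = s then phi p m μ (F4d k.1 tse) k.1 x else 0 :=
      phi_filter (F4d k.1 tse) (F4n k.1 tse s) s k.1 hbnum hknum
    have hagree : ∀ i, i ≤ k.1 → FL1 k.1 tse ws' s i = F4n k.1 tse s i := by
      intro i hi
      by_cases hik : i = k.1
      · rw [hFL1, hF4n, if_pos hik, if_pos hik]
      · rw [hFL1, hF4n, if_neg hik, if_neg hik, if_pos hi, hF4d i hi]
    have hrepL1 : ∀ x : S × S, phi p m μ (FL1 k.1 tse ws' s) k.1 x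
        = if x.1 = s then phi p m μ (F4d k.1 tse) k.1 x else 0 :=
      fun x => (phi_congr (FL1 k.1 tse ws' s) (F4n k.1 tse s) k.1 hagree x).trans (hrepN x)
    have hsuppL1 : ∀ x : S × S, phi p m μ (FL1 k.1 tse ws' s) k.1 x ≠ 0 → x.1 = ws' k.1 := by
      intro x hx
      rw [hrepL1 x] at hx
      rw [hws'k]
      by_contra hxs
      exact hx (if_neg hxs)
    have hrep2 : ∀ x : S × S, phi p m μ (FL2 k.1 s) k.1 x
        = if x.1 = s then μ x else 0 := by
      intro x
      have h1 := phi_filter (p := p) (m := m) (μ := μ) (Fall : ℕ → Finset (S × S)) (FL2 k.1 s) s k.1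
        (fun i hi => by rw [hFL2, if_neg (by omega)]; rfl)
        (fun y => by
          rw [hFL2, if_pos rfl, Finset.mem_product, Finset.mem_singleton]
          exact ⟨fun h => ⟨h.1, mem_univ _⟩, fun h => ⟨h.1, mem_univ _⟩⟩) x
      rw [h1, free_mu Fall hp0 hm hμ0 hP hstat k.1 (fun i _ => rfl) x]
    have hrepR2 : ∀ x : S × S, phi p m μ (FR2 k.1 ws' s) k.1 x
        = if x.1 = s then μ x else 0 := by
      intro x
      have h1 := phi_filter (p := p) (m := m) (μ := μ) (Fall : ℕ → Finset (S × S)) (FR2 k.1 ws' s) s k.1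
        (fun i hi => by rw [hFR2, if_neg (by omega), if_pos (by omega)]; rfl)
        (fun y => by
          rw [hFR2, if_pos rfl, Finset.mem_product, Finset.mem_singleton]
          exact ⟨fun h => ⟨h.1, mem_univ _⟩, fun h => ⟨h.1, mem_univ _⟩⟩) x
      rw [h1, free_mu Fall hp0 hm hμ0 hP hstat k.1 (fun i _ => rfl) x]
    have hsuppR2 : ∀ x : S × S, phi p m μ (FR2 k.1 ws' s) k.1 x ≠ 0 → x.1 = ws' k.1 := by
      intro x hx
      rw [hrepR2 x] at hx
      rw [hws'k]
      by_contra hxs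
      exact hx (if_neg hxs)
    -- the four condition equivalences
    have hiffL1 : ∀ v : Fin n → S × S,
        ((v k).1 = s ∧ (∀ i ≤ k, (v i).2 = ts i) ∧ ∀ j, k < j → (v j).1 = ws j)
          ↔ ∀ i : Fin n, v i ∈ FL1 k.1 tse ws' s i.1 := by
      intro v
      constructor
      · rintro ⟨h1, h2, h3⟩ i
        by_cases hik : i.1 = k.1
        · have hik' : i = k := Fin.ext hik
          rw [hFL1, if_pos hik, Finset.mem_product, Finset.mem_singleton,
            Finset.mem_singleton, htse i.1 i.2, hik']
          exact ⟨h1, h2 k le_rfl⟩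
        · by_cases hile : i.1 ≤ k.1
          · rw [hFL1, if_neg hik, if_pos hile, Finset.mem_product, Finset.mem_singleton,
              htse i.1 i.2]
            exact ⟨mem_univ _, h2 i (Fin.le_def.mpr hile)⟩
          · rw [hFL1, if_neg hik, if_neg hile, Finset.mem_product, Finset.mem_singleton,
              hws' i.1 (by omega), hwse i.1 i.2]
            exact ⟨h3 i (Fin.lt_def.mpr (by omega)), mem_univ _⟩
      · intro h
        refine ⟨?_, ?_, ?_⟩
        · have := h k
          rw [hFL1, if_pos rfl, Finset.mem_product, Finset.mem_singleton] at this
          exact this.1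
        · intro i hik
          have := h i
          by_cases hie : i.1 = k.1
          · rw [hFL1, if_pos hie, Finset.mem_product, Finset.mem_singleton,
              Finset.mem_singleton, htse i.1 i.2] at this
            exact this.2
          · rw [hFL1, if_neg hie, if_pos (Fin.le_def.mp hik), Finset.mem_product,
              Finset.mem_singleton, htse i.1 i.2] at this
            exact this.2
        · intro j hkj
          have := h j
          have hj1 : ¬ j.1 = k.1 := by have := Fin.lt_def.mp hkj; omega
          have hj2 : ¬ j.1 ≤ k.1 := by have := Fin.lt_def.mp hkj; omega
          rw [hFL1, if_neg hj1, if_neg hj2, Finset.mem_product, Finset.mem_singleton,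
            hws' j.1 (by omega), hwse j.1 j.2] at this
          exact this.1
    have hiffL2 : ∀ v : Fin n → S × S,
        ((v k).1 = s) ↔ ∀ i : Fin n, v i ∈ FL2 k.1 s i.1 := by
      intro v
      constructor
      · intro h i
        by_cases hik : i.1 = k.1
        · have hik' : i = k := Fin.ext hik
          rw [hFL2, if_pos hik, Finset.mem_product, Finset.mem_singleton, hik']
          exact ⟨h, mem_univ _⟩
        · rw [hFL2, if_neg hik]; exact mem_univ _
      · intro h
        have := h k
        rw [hFL2, if_pos rfl, Finset.mem_product, Finset.mem_singleton] at this
        exact this.1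
    have hiffR1 : ∀ v : Fin n → S × S,
        ((v k).1 = s ∧ ∀ i ≤ k, (v i).2 = ts i)
          ↔ ∀ i : Fin n, v i ∈ F4n k.1 tse s i.1 := by
      intro v
      constructor
      · rintro ⟨h1, h2⟩ i
        by_cases hik : i.1 = k.1
        · have hik' : i = k := Fin.ext hik
          rw [hF4n, if_pos hik, Finset.mem_product, Finset.mem_singleton,
            Finset.mem_singleton, htse i.1 i.2, hik']
          exact ⟨h1, h2 k le_rfl⟩
        · by_cases hile : i.1 ≤ k.1
          · rw [hF4n, if_neg hik, hF4d i.1 hile, Finset.mem_product, Finset.mem_singleton,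
              htse i.1 i.2]
            exact ⟨mem_univ _, h2 i (Fin.le_def.mpr hile)⟩
          · rw [hF4n, if_neg hik, hF4dfree i.1 (by omega)]; exact mem_univ _
      · intro h
        constructor
        · have := h k
          rw [hF4n, if_pos rfl, Finset.mem_product, Finset.mem_singleton] at this
          exact this.1
        · intro i hik
          have := h i
          by_cases hie : i.1 = k.1
          · rw [hF4n, if_pos hie, Finset.mem_product, Finset.mem_singleton,
              Finset.mem_singleton, htse i.1 i.2] at this
            exact this.2
          · rw [hF4n, if_neg hie, hF4d i.1 (Fin.le_def.mp hik), Finset.mem_product,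
              Finset.mem_singleton, htse i.1 i.2] at this
            exact this.2
    have hiffR2 : ∀ v : Fin n → S × S,
        ((v k).1 = s ∧ ∀ j, k < j → (v j).1 = ws j)
          ↔ ∀ i : Fin n, v i ∈ FR2 k.1 ws' s i.1 := by
      intro v
      constructor
      · rintro ⟨h1, h2⟩ i
        by_cases hik : i.1 = k.1
        · have hik' : i = k := Fin.ext hik
          rw [hFR2, if_pos hik, Finset.mem_product, Finset.mem_singleton, hik']
          exact ⟨h1, mem_univ _⟩
        · by_cases hile : i.1 ≤ k.1
          · rw [hFR2, if_neg hik, if_pos hile]; exact mem_univ _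
          · rw [hFR2, if_neg hik, if_neg hile, Finset.mem_product, Finset.mem_singleton,
              hws' i.1 (by omega), hwse i.1 i.2]
            exact ⟨h2 i (Fin.lt_def.mpr (by omega)), mem_univ _⟩
      · intro h
        constructor
        · have := h k
          rw [hFR2, if_pos rfl, Finset.mem_product, Finset.mem_singleton] at this
          exact this.1
        · intro j hkj
          have := h j
          have hj1 : ¬ j.1 = k.1 := by have := Fin.lt_def.mp hkj; omega
          have hj2 : ¬ j.1 ≤ k.1 := by have := Fin.lt_def.mp hkj; omega
          rw [hFR2, if_neg hj1, if_neg hj2, Finset.mem_product, Finset.mem_singleton,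
            hws' j.1 (by omega), hwse j.1 j.2] at this
          exact this.1
    -- the four sums
    have hSL1 : (∑ v ∈ Finset.univ.filter (fun v : Fin n → S × S =>
          (v k).1 = s ∧ (∀ i ≤ k, (v i).2 = ts i) ∧ ∀ j, k < j → (v j).1 = ws j),
            nu p m μ n hn v)
        = (μ (s, tse k.1) / m (tse k.1) * Mt p m tse k.1)
          * ∏ i ∈ Finset.range (n-1-k.1), p (ws' (k.1+i)) (ws' (k.1+i+1)) := by
      refine (master (FL1 k.1 tse ws' s) _ (by infer_instance) hiffL1).trans ?_
      refine (segs (FL1 k.1 tse ws' s) k.1 ws' hkn hsuppL1 (fun i hi => by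
        rw [hFL1, if_neg (by omega), if_neg (by omega)])).trans ?_
      congr 1
      refine Eq.trans ?_ (apat_fil (F4d k.1 tse) tse k.1 s hF4d)
      exact Finset.sum_congr rfl fun x _ => hrepL1 x
    have hSL2 : (∑ v ∈ Finset.univ.filter (fun v : Fin n → S × S => (v k).1 = s),
          nu p m μ n hn v) = m s := by
      refine (master (FL2 k.1 s) _ (by infer_instance) hiffL2).trans ?_
      refine (segfree (FL2 k.1 s) k.1 hkn (fun i hi => by
        rw [hFL2, if_neg (by omega)])).trans ?_
      calc ∑ x : S × S, phi p m μ (FL2 k.1 s) k.1 x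
          = ∑ x : S × S, (if x.1 = s then μ x else 0) :=
            Finset.sum_congr rfl fun x _ => hrep2 x
        _ = ∑ b : S, μ (s, b) := sum_pair_fst s μ
        _ = m s := hμs s
    have hSR1 : (∑ v ∈ Finset.univ.filter (fun v : Fin n → S × S =>
          (v k).1 = s ∧ ∀ i ≤ k, (v i).2 = ts i), nu p m μ n hn v)
        = μ (s, tse k.1) / m (tse k.1) * Mt p m tse k.1 := by
      refine (master (F4n k.1 tse s) _ (by infer_instance) hiffR1).trans ?_
      refine (segfree (F4n k.1 tse s) k.1 hkn (fun i hi => by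
        rw [hF4n, if_neg (by omega), hF4dfree i hi])).trans ?_
      refine Eq.trans ?_ (apat_fil (F4d k.1 tse) tse k.1 s hF4d)
      exact Finset.sum_congr rfl fun x _ => hrepN x
    have hSR2 : (∑ v ∈ Finset.univ.filter (fun v : Fin n → S × S =>
          (v k).1 = s ∧ ∀ j, k < j → (v j).1 = ws j), nu p m μ n hn v)
        = m s * ∏ i ∈ Finset.range (n-1-k.1), p (ws' (k.1+i)) (ws' (k.1+i+1)) := by
      refine (master (FR2 k.1 ws' s) _ (by infer_instance) hiffR2).trans ?_
      refine (segs (FR2 k.1 ws' s) k.1 ws' hkn hsuppR2 (fun i hi => by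
        rw [hFR2, if_neg (by omega), if_neg (by omega)])).trans ?_
      congr 1
      calc ∑ x : S × S, phi p m μ (FR2 k.1 ws' s) k.1 x
          = ∑ x : S × S, (if x.1 = s then μ x else 0) :=
            Finset.sum_congr rfl fun x _ => hrepR2 x
        _ = ∑ b : S, μ (s, b) := sum_pair_fst s μ
        _ = m s := hμs s
    rw [hSL1, hSL2, hSR1, hSR2]
    ring
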